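/- Let n ≥ 2 be an integer, p > 1 and θ ≥ 0 real numbers, A a symmetric n×n real matrix, and s a real number. Set h := (p−1)·A₁₁ + Σ_{i=2}^n A_{ii} + s, and assume h ≥ 0 and s² ≤ θ²·h. Then Σ_{i,j=1}^n A_{ij}² ≥ h²/(2n−1) − 2(p−1)·h·A₁₁/(2n−1) − θ²·h/n + (1 + (p−1)²/(2n−1))·A₁₁² + 2·Σ_{i=2}^n A_{1i}². -/
import Mathlib


open Finset

/-- Pointwise linear-algebra core of estimate (4.6): for a symmetric `n × n` matrix `A`
(`n ≥ 2`), `p > 1`, `θ ≥ 0`, `s ∈ ℝ`, with `h = (p−1)A₁₁ + Σ_{i≥2} A_{ii} + s ≥ 0` and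
`s² ≤ θ²h`, one has
`Σ_{i,j} A_{ij}² ≥ h²/(2n−1) − 2(p−1)hA₁₁/(2n−1) − θ²h/n
  + (1 + (p−1)²/(2n−1))A₁₁² + 2 Σ_{i≥2} A_{1i}²`. -/
theorem hessian_estimate' (n : ℕ) (hn : 2 ≤ n) (p θ : ℝ) (hp : 1 < p) (hθ : 0 ≤ θ)
    (A : Matrix (Fin n) (Fin n) ℝ) (hA : A.IsSymm) (s : ℝ) (h : ℝ)
    (hh : h = (p - 1) * A ⟨0, by omega⟩ ⟨0, by omega⟩ +
      ∑ i ∈ univ.erase ⟨0, by omega⟩, A i i + s)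
    (hh0 : 0 ≤ h) (hs : s ^ 2 ≤ θ ^ 2 * h) :
    ∑ i : Fin n, ∑ j : Fin n, (A i j) ^ 2 ≥
      h ^ 2 / (2 * (n : ℝ) - 1)
        - 2 * (p - 1) * h * A ⟨0, by omega⟩ ⟨0, by omega⟩ / (2 * (n : ℝ) - 1)
        - θ ^ 2 * h / (n : ℝ)
        + (1 + (p - 1) ^ 2 / (2 * (n : ℝ) - 1)) * (A ⟨0, by omega⟩ ⟨0, by omega⟩) ^ 2
        + 2 * ∑ i ∈ univ.erase ⟨0, by omega⟩, (A ⟨0, by omega⟩ i) ^ 2 := by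
  
  have hn0 : 0 < n := by omega
  set e0 : Fin n := ⟨0, by omega⟩ with he0
  set a : ℝ := A e0 e0 with ha
  set T : ℝ := ∑ i ∈ univ.erase e0, A i i with hT
  set D : ℝ := ∑ i ∈ univ.erase e0, (A i i) ^ 2 with hD
  set S1 : ℝ := ∑ i ∈ univ.erase e0, (A e0 i) ^ 2 with hS1
  set N : ℝ := (n : ℝ) with hN
  have hN2 : (2 : ℝ) ≤ N := by rw [hN]; exact_mod_cast hn
  have hNpos : (0 : ℝ) < N := by linarith
  have h2N : (0 : ℝ) < 2 * N - 1 := by linarith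
  -- lower bound for the sum of squares
  have LB : a ^ 2 + D + 2 * S1 ≤ ∑ i : Fin n, ∑ j : Fin n, (A i j) ^ 2 := by
    rw [← Finset.sum_erase_add univ _ (mem_univ e0)]
    have row0 : ∑ j : Fin n, (A e0 j) ^ 2 = S1 + a ^ 2 :=
      (Finset.sum_erase_add univ _ (mem_univ e0)).symm
    have rows : S1 + D ≤ ∑ i ∈ univ.erase e0, ∑ j : Fin n, (A i j) ^ 2 := by
      rw [hS1, hD, ← Finset.sum_add_distrib]
      refine Finset.sum_le_sum fun i hi => ?_
      have hne : e0 ≠ i := (Finset.ne_of_mem_erase hi).symm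
      have hsym : A i e0 = A e0 i := hA.apply e0 i
      calc (A e0 i) ^ 2 + (A i i) ^ 2 = ∑ j ∈ ({e0, i} : Finset (Fin n)), (A i j) ^ 2 := by
            rw [Finset.sum_pair hne, hsym]
        _ ≤ ∑ j : Fin n, (A i j) ^ 2 :=
            Finset.sum_le_sum_of_subset_of_nonneg (Finset.subset_univ _)
              (fun j _ _ => sq_nonneg _)
    rw [row0]; linarith
  -- Cauchy–Schwarz on the diagonal tail
  have hcard : ((univ.erase e0).card : ℝ) = N - 1 := by
    rw [Finset.card_erase_of_mem (mem_univ e0), Finset.card_univ, Fintype.card_fin]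
    rw [Nat.cast_sub hn0, Nat.cast_one, hN]
  have cauchy : T ^ 2 ≤ (N - 1) * D := by
    have := sq_sum_le_card_mul_sum_sq (s := univ.erase e0) (f := fun i => A i i)
    rw [← hT, ← hD] at this
    calc T ^ 2 ≤ ((univ.erase e0).card : ℝ) * D := this
      _ = (N - 1) * D := by rw [hcard]
  -- key inequality
  have hX : T = (h - (p - 1) * a) - s := by rw [hh]; ring
  have key : (h - (p - 1) * a) ^ 2 / (2 * N - 1) - θ ^ 2 * h / N ≤ D := by
    rw [sub_le_iff_le_add, div_le_iff₀ h2N]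
    have hu : θ ^ 2 * h / N * N = θ ^ 2 * h := div_mul_cancel₀ _ hNpos.ne'
    set X := h - (p - 1) * a
    set u := θ ^ 2 * h / N
    have hsu : s ^ 2 ≤ u * N := by rw [hu]; exact hs
    have c1 : (X - s) ^ 2 ≤ (N - 1) * D := hX ▸ cauchy
    nlinarith [sq_nonneg (N * X - (2 * N - 1) * s),
      mul_le_mul_of_nonneg_left c1 (by nlinarith : (0:ℝ) ≤ N * (2 * N - 1)),
      mul_le_mul_of_nonneg_left hsu (by nlinarith : (0:ℝ) ≤ (N - 1) * (2 * N - 1)),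
      mul_pos hNpos (show (0:ℝ) < N - 1 by linarith)]
  have rhs_eq : h ^ 2 / (2 * N - 1) - 2 * (p - 1) * h * a / (2 * N - 1) - θ ^ 2 * h / N
        + (1 + (p - 1) ^ 2 / (2 * N - 1)) * a ^ 2 + 2 * S1
      = (h - (p - 1) * a) ^ 2 / (2 * N - 1) - θ ^ 2 * h / N + a ^ 2 + 2 * S1 := by
    field_simp
    ring
  rw [ge_iff_le, rhs_eq]
  linarith
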